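/- arXiv:2308.10116 — 2 statements merged into one kernel-verified Lean document; each statement's English description precedes it below -/
import Mathlib

section
/- Let α > 0. There exists a constant c₃ > 0 such that for every w ∈ 𝔻, I₁(w) := ∬_{𝔻} (1 - |z|²)^{α+1} (1 - |w|²)^{α} / (2 |1 - z̄ w|^{α+1} |z - w|) dx dy ≤ c₃ (1 - |w|²)^{α}. -/
open Real Complex Set MeasureTheory
open scoped ENNReal NNReal

lemma aux_translate (w : ℂ) :
    ∫⁻ z in Metric.ball w 2, ENNReal.ofReal ‖z - w‖⁻¹
      = ∫⁻ z in Metric.ball (0:ℂ) 2, ENNReal.ofReal ‖z‖⁻¹ := by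
  rw [← lintegral_indicator measurableSet_ball _,
    ← lintegral_indicator measurableSet_ball _]
  have h : ∀ z : ℂ, (Metric.ball w 2).indicator (fun z => ENNReal.ofReal ‖z - w‖⁻¹) z
      = (Metric.ball (0:ℂ) 2).indicator (fun z => ENNReal.ofReal ‖z‖⁻¹) (z - w) := by
    intro z
    by_cases hz : z ∈ Metric.ball w 2
    · rw [Set.indicator_of_mem hz, Set.indicator_of_mem]
      rw [Metric.mem_ball, dist_eq_norm, sub_zero]
      rw [Metric.mem_ball, dist_eq_norm] at hz
      exact hz
    · rw [Set.indicator_of_notMem hz, Set.indicator_of_notMem]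
      rw [Metric.mem_ball, dist_eq_norm, sub_zero]
      rw [Metric.mem_ball, dist_eq_norm] at hz
      exact hz
  simp_rw [h]
  exact lintegral_sub_right_eq_self
    (fun z => (Metric.ball (0:ℂ) 2).indicator (fun z => ENNReal.ofReal ‖z‖⁻¹) z) w

lemma aux_ball2 :
    ∫⁻ z in Metric.ball (0:ℂ) 2, ENNReal.ofReal ‖z‖⁻¹ ≤ ENNReal.ofReal (32 * π) := by
  classical
  set S : ℕ → Set ℂ := fun n =>
    {z : ℂ | 2 * (2⁻¹:ℝ)^(n+1) ≤ ‖z‖} ∩ Metric.ball 0 (2 * (2⁻¹:ℝ)^n) with hS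
  have hpow : ∀ n : ℕ, 2 * (2⁻¹:ℝ)^(n+1) = (2⁻¹:ℝ)^n := by
    intro n; rw [pow_succ]; ring
  have hcover : Metric.ball (0:ℂ) 2 ⊆ {0} ∪ ⋃ n, S n := by
    intro z hz
    by_cases hz0 : z = 0
    · exact Or.inl hz0
    right
    have h0 : 0 < ‖z‖ := norm_pos_iff.2 hz0
    have h2 : ‖z‖ < 2 := by
      rw [Metric.mem_ball, dist_eq_norm, sub_zero] at hz; exact hz
    have hP : ∃ n : ℕ, 2 * (2⁻¹:ℝ)^(n+1) ≤ ‖z‖ := by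
      obtain ⟨m, hm⟩ := exists_pow_lt_of_lt_one h0 (by norm_num : (2⁻¹:ℝ) < 1)
      exact ⟨m, by rw [hpow]; exact hm.le⟩
    refine Set.mem_iUnion.2 ⟨Nat.find hP, Nat.find_spec hP, ?_⟩
    rw [Metric.mem_ball, dist_eq_norm, sub_zero]
    rcases Nat.eq_zero_or_eq_succ_pred (Nat.find hP) with h | h
    · rw [h]; simpa using h2
    · rw [h]
      have := Nat.find_min hP (show Nat.find hP - 1 < Nat.find hP by omega)
      push_neg at this
      have heq : Nat.find hP - 1 + 1 = Nat.find hP := by omega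
      calc ‖z‖ < 2 * (2⁻¹:ℝ)^(Nat.find hP - 1 + 1) := this
        _ = 2 * (2⁻¹:ℝ)^(Nat.find hP) := by rw [heq]
        _ = 2 * (2⁻¹:ℝ)^((Nat.find hP - 1) + 1) := by rw [heq]
  have hterm : ∀ n : ℕ, ∫⁻ z in S n, ENNReal.ofReal ‖z‖⁻¹
      ≤ ENNReal.ofReal (4 * π) * (2⁻¹ : ℝ≥0∞)^n := by
    intro n
    have hpos : (0:ℝ) < 2 * (2⁻¹:ℝ)^(n+1) := by positivity
    have h1 : ∫⁻ z in S n, ENNReal.ofReal ‖z‖⁻¹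
        ≤ ∫⁻ _ in S n, ENNReal.ofReal ((2 * (2⁻¹:ℝ)^(n+1))⁻¹) := by
      refine setLIntegral_mono measurable_const (fun z hz => ?_)
      exact ENNReal.ofReal_le_ofReal (inv_anti₀ hpos hz.1)
    rw [setLIntegral_const] at h1
    have h2 : volume (S n) ≤ volume (Metric.ball (0:ℂ) (2 * (2⁻¹:ℝ)^n)) :=
      measure_mono Set.inter_subset_right
    have h3 : ∫⁻ z in S n, ENNReal.ofReal ‖z‖⁻¹
        ≤ ENNReal.ofReal ((2 * (2⁻¹:ℝ)^(n+1))⁻¹) * volume (Metric.ball (0:ℂ) (2 * (2⁻¹:ℝ)^n)) :=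
      h1.trans (mul_le_mul_right h2 _)
    refine h3.trans (le_of_eq ?_)
    rw [Complex.volume_ball]
    have hπ : ((NNReal.pi : ℝ≥0∞)) = ENNReal.ofReal π := by
      rw [← NNReal.coe_real_pi, ENNReal.ofReal_coe_nnreal]
    rw [hπ]
    have hr : (0:ℝ) ≤ 2 * (2⁻¹:ℝ)^n := by positivity
    rw [← ENNReal.ofReal_pow hr]
    rw [← ENNReal.ofReal_mul (by positivity), ← ENNReal.ofReal_mul (by positivity)]
    have h2inv : (2⁻¹ : ℝ≥0∞) = ENNReal.ofReal (2⁻¹:ℝ) := by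
      rw [ENNReal.ofReal_inv_of_pos (by norm_num)]
      norm_num
    rw [h2inv, ← ENNReal.ofReal_pow (by norm_num), ← ENNReal.ofReal_mul (by positivity)]
    congr 1
    have : ((2:ℝ) * (2⁻¹:ℝ)^(n+1))⁻¹ = (2:ℝ)^n := by
      rw [hpow]
      rw [inv_pow, inv_inv]
    rw [this]
    have hne : ((2:ℝ))^n ≠ 0 := by positivity
    field_simp
    rw [mul_comm _ ((2:ℝ) ^ 2), mul_assoc, ← mul_pow]; norm_num
  calc ∫⁻ z in Metric.ball (0:ℂ) 2, ENNReal.ofReal ‖z‖⁻¹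
      ≤ ∫⁻ z in {0} ∪ ⋃ n, S n, ENNReal.ofReal ‖z‖⁻¹ := lintegral_mono_set hcover
    _ ≤ (∫⁻ z in ({0}:Set ℂ), ENNReal.ofReal ‖z‖⁻¹)
        + ∫⁻ z in ⋃ n, S n, ENNReal.ofReal ‖z‖⁻¹ := by
        refine lintegral_mono' (Measure.restrict_union_le _ _) le_rfl |>.trans ?_
        rw [lintegral_add_measure]
    _ = ∫⁻ z in ⋃ n, S n, ENNReal.ofReal ‖z‖⁻¹ := by
        rw [setLIntegral_measure_zero _ _ (measure_singleton 0), zero_add]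
    _ ≤ ∑' n, ∫⁻ z in S n, ENNReal.ofReal ‖z‖⁻¹ := lintegral_iUnion_le _ _
    _ ≤ ∑' n : ℕ, ENNReal.ofReal (4 * π) * (2⁻¹ : ℝ≥0∞)^n := ENNReal.tsum_le_tsum hterm
    _ = ENNReal.ofReal (4 * π) * (1 - 2⁻¹)⁻¹ := by
        rw [ENNReal.tsum_mul_left, ENNReal.tsum_geometric]
    _ = ENNReal.ofReal (4 * π) * 2 := by rw [ENNReal.one_sub_inv_two, inv_inv]
    _ ≤ ENNReal.ofReal (32 * π) := by
        rw [show (2:ℝ≥0∞) = ENNReal.ofReal 2 by norm_num,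
          ← ENNReal.ofReal_mul (by positivity)]
        refine ENNReal.ofReal_le_ofReal ?_
        nlinarith [Real.pi_pos]

lemma aux_pointwise (α : ℝ) (hα : 0 < α) (w z : ℂ) (hw : ‖w‖ < 1) (hz : ‖z‖ < 1) :
    (1 - ‖z‖^2) ^ (α+1) * (1 - ‖w‖^2) ^ α /
        (2 * ‖1 - (starRingEnd ℂ) z * w‖ ^ (α+1) * ‖z - w‖)
      ≤ (1 - ‖w‖^2) ^ α * 2 ^ α * ‖z - w‖⁻¹ := by
  have hzn : 0 ≤ ‖z‖ := norm_nonneg z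
  have hwn : 0 ≤ ‖w‖ := norm_nonneg w
  have ha : 0 ≤ 1 - ‖z‖^2 := by nlinarith
  set b := ‖1 - (starRingEnd ℂ) z * w‖ with hbdef
  have hb : 0 < b := by
    have hne : (1:ℂ) - (starRingEnd ℂ) z * w ≠ 0 := by
      intro h
      have h1 : (starRingEnd ℂ) z * w = 1 := by
        have := sub_eq_zero.mp h; exact this.symm
      have h2 : ‖(starRingEnd ℂ) z * w‖ = 1 := by rw [h1, norm_one]
      rw [norm_mul, RCLike.norm_conj] at h2
      nlinarith
    exact norm_pos_iff.2 hne
  have hKnn : 0 ≤ (1 - ‖w‖^2) ^ α := Real.rpow_nonneg (by nlinarith) α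
  have key : 1 - ‖z‖^2 ≤ 2 * b := by
    have h1 : 1 - ‖z‖ * ‖w‖ ≤ b := by
      have := norm_sub_norm_le (1:ℂ) ((starRingEnd ℂ) z * w)
      rw [norm_one, norm_mul, RCLike.norm_conj] at this
      exact this
    nlinarith
  have keyp : (1 - ‖z‖^2) ^ (α+1) ≤ 2 ^ (α+1) * b ^ (α+1) := by
    calc (1 - ‖z‖^2) ^ (α+1) ≤ (2*b) ^ (α+1) :=
          Real.rpow_le_rpow ha key (by linarith)
      _ = 2 ^ (α+1) * b ^ (α+1) := Real.mul_rpow (by norm_num) hb.le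
  rcases eq_or_ne ‖z - w‖ 0 with hd | hd
  · rw [hd]; simp
  · have hd0 : 0 < ‖z - w‖ := lt_of_le_of_ne (norm_nonneg _) (Ne.symm hd)
    have hbpow : 0 < b ^ (α+1) := Real.rpow_pos_of_pos hb _
    rw [div_le_iff₀ (by positivity)]
    have h2 : (2:ℝ) ^ (α+1) = 2 ^ α * 2 := Real.rpow_add_one (by norm_num) α
    have hcancel : ‖z - w‖⁻¹ * ‖z - w‖ = 1 := inv_mul_cancel₀ hd
    have hrhs : (1 - ‖w‖^2) ^ α * 2 ^ α * ‖z - w‖⁻¹ * (2 * b ^ (α+1) * ‖z - w‖)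
        = 2 ^ (α+1) * b ^ (α+1) * (1 - ‖w‖^2) ^ α := by
      calc (1 - ‖w‖^2) ^ α * 2 ^ α * ‖z - w‖⁻¹ * (2 * b ^ (α+1) * ‖z - w‖)
          = 2 ^ α * 2 * b ^ (α+1) * (1 - ‖w‖^2) ^ α * (‖z - w‖⁻¹ * ‖z - w‖) := by ring
        _ = 2 ^ (α+1) * b ^ (α+1) * (1 - ‖w‖^2) ^ α := by rw [hcancel, h2]; ring
    rw [hrhs]
    exact mul_le_mul_of_nonneg_right keyp hKnn

theorem stmt_5 (α : ℝ) (hα : 0 < α) :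
    ∃ c₃ > 0, ∀ w ∈ Metric.ball (0:ℂ) 1,
      (∫ z in Metric.ball (0:ℂ) 1,
        (1 - ‖z‖^2) ^ (α+1) * (1 - ‖w‖^2) ^ α /
          (2 * ‖1 - (starRingEnd ℂ) z * w‖ ^ (α+1) * ‖z - w‖))
        ≤ c₃ * (1 - ‖w‖^2) ^ α := by
  refine ⟨2 ^ α * (32 * π) + 1, by positivity, ?_⟩
  intro w hw
  have hw1 : ‖w‖ < 1 := by
    rw [Metric.mem_ball, dist_eq_norm, sub_zero] at hw; exact hw
  set K := (1 - ‖w‖^2) ^ α with hKdef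
  have hK : 0 < K := Real.rpow_pos_of_pos (by nlinarith [norm_nonneg w]) α
  set f : ℂ → ℝ := fun z =>
    (1 - ‖z‖^2) ^ (α+1) * (1 - ‖w‖^2) ^ α /
      (2 * ‖1 - (starRingEnd ℂ) z * w‖ ^ (α+1) * ‖z - w‖) with hfdef
  show ∫ z in Metric.ball (0:ℂ) 1, f z ≤ (2 ^ α * (32 * π) + 1) * K
  by_cases hfm : AEStronglyMeasurable f (volume.restrict (Metric.ball (0:ℂ) 1))
  swap
  · rw [integral_non_aestronglyMeasurable hfm]
    positivity
  have hnonneg : ∀ z ∈ Metric.ball (0:ℂ) 1, 0 ≤ f z := by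
    intro z hz
    have hz1 : ‖z‖ < 1 := by
      rw [Metric.mem_ball, dist_eq_norm, sub_zero] at hz; exact hz
    have ha : 0 ≤ 1 - ‖z‖^2 := by nlinarith [norm_nonneg z]
    have : 0 ≤ (1 - ‖z‖^2) ^ (α+1) := Real.rpow_nonneg ha _
    have hbnn : (0:ℝ) ≤ ‖1 - (starRingEnd ℂ) z * w‖ ^ (α+1) :=
      Real.rpow_nonneg (norm_nonneg _) _
    apply div_nonneg
    · exact mul_nonneg this hK.le
    · positivity
  have hnonneg_ae : 0 ≤ᵐ[volume.restrict (Metric.ball (0:ℂ) 1)] f :=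
    (ae_restrict_iff' measurableSet_ball).2 (ae_of_all _ hnonneg)
  rw [integral_eq_lintegral_of_nonneg_ae hnonneg_ae hfm]
  refine ENNReal.toReal_le_of_le_ofReal (by positivity) ?_
  have step1 : ∫⁻ z in Metric.ball (0:ℂ) 1, ENNReal.ofReal (f z)
      ≤ ∫⁻ z in Metric.ball (0:ℂ) 1,
          ENNReal.ofReal (K * 2 ^ α) * ENNReal.ofReal ‖z - w‖⁻¹ := by
    refine setLIntegral_mono (measurable_const.mul
      (((measurable_id.sub_const w).norm.inv).ennreal_ofReal)) (fun z hz => ?_)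
    have hz1 : ‖z‖ < 1 := by
      rw [Metric.mem_ball, dist_eq_norm, sub_zero] at hz; exact hz
    rw [← ENNReal.ofReal_mul (by positivity)]
    exact ENNReal.ofReal_le_ofReal (aux_pointwise α hα w z hw1 hz1)
  have step2 : ∫⁻ z in Metric.ball (0:ℂ) 1,
        ENNReal.ofReal (K * 2 ^ α) * ENNReal.ofReal ‖z - w‖⁻¹
      = ENNReal.ofReal (K * 2 ^ α) * ∫⁻ z in Metric.ball (0:ℂ) 1, ENNReal.ofReal ‖z - w‖⁻¹ :=
    lintegral_const_mul' _ _ ENNReal.ofReal_ne_top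
  have step3 : ∫⁻ z in Metric.ball (0:ℂ) 1, ENNReal.ofReal ‖z - w‖⁻¹
      ≤ ENNReal.ofReal (32 * π) := by
    have hsub : Metric.ball (0:ℂ) 1 ⊆ Metric.ball w 2 := by
      intro z hz
      rw [Metric.mem_ball] at hz ⊢
      calc dist z w ≤ dist z 0 + dist 0 w := dist_triangle _ _ _
        _ < 1 + 1 := by
            refine add_lt_add hz ?_
            rw [dist_comm, dist_eq_norm, sub_zero]; exact hw1
        _ = 2 := by norm_num
    calc ∫⁻ z in Metric.ball (0:ℂ) 1, ENNReal.ofReal ‖z - w‖⁻¹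
        ≤ ∫⁻ z in Metric.ball w 2, ENNReal.ofReal ‖z - w‖⁻¹ := lintegral_mono_set hsub
      _ = ∫⁻ z in Metric.ball (0:ℂ) 2, ENNReal.ofReal ‖z‖⁻¹ := aux_translate w
      _ ≤ ENNReal.ofReal (32 * π) := aux_ball2
  calc ∫⁻ z in Metric.ball (0:ℂ) 1, ENNReal.ofReal (f z)
      ≤ ENNReal.ofReal (K * 2 ^ α) * ENNReal.ofReal (32 * π) :=
        step1.trans (step2.le.trans (mul_le_mul_right step3 _))
    _ = ENNReal.ofReal (K * 2 ^ α * (32 * π)) := by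
        rw [← ENNReal.ofReal_mul (by positivity)]
    _ ≤ ENNReal.ofReal ((2 ^ α * (32 * π) + 1) * K) := by
        refine ENNReal.ofReal_le_ofReal ?_
        nlinarith [Real.pi_pos, Real.rpow_pos_of_pos (show (0:ℝ)<2 by norm_num) α, hK]
end

section
/- Let α > 0 and let g: 𝔻 → ℂ be continuous with |g(z)| ≤ M (1-|z|²)^{-α} for all z ∈ 𝔻. Then ∬_{𝔻} (1-|z|²)^{α+1} (1-|w|²)^{α} / (2|1 - z̄w|^{α+1} |z - w|) · |g(z)| dx dy ≤ c M for a constant c independent of w ∈ 𝔻; i.e., the majorant of |∂_{w̄} G_α[g](w)| obtained from the pointwise Green kernel estimate is uniformly bounded on 𝔻. -/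
open Real Complex Set MeasureTheory

private lemma aux_f_int :
    IntegrableOn (fun x : ℝ => |x| ^ (-(2:ℝ)⁻¹)) (Set.Ioc (-2) 2) volume := by
  have hr : (-1:ℝ) < -(2:ℝ)⁻¹ := by norm_num
  have h02 : IntegrableOn (fun x : ℝ => x ^ (-(2:ℝ)⁻¹)) (Set.Ioc 0 2) volume :=
    (intervalIntegrable_iff_integrableOn_Ioc_of_le (by norm_num)).1 (intervalIntegral.intervalIntegrable_rpow' hr)
  have h02' : IntegrableOn (fun x : ℝ => |x| ^ (-(2:ℝ)⁻¹)) (Set.Ioc 0 2) volume :=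
    h02.congr_fun (fun x hx => by rw [abs_of_pos hx.1]) measurableSet_Ioc
  have h02'' : IntegrableOn (fun x : ℝ => |x| ^ (-(2:ℝ)⁻¹)) (Set.Ico 0 2) volume := by
    rw [IntegrableOn, Measure.restrict_congr_set Ico_ae_eq_Ioc]; exact h02'
  have hneg : IntegrableOn (fun x : ℝ => |x| ^ (-(2:ℝ)⁻¹)) (Set.Ioc (-2) 0) volume := by
    have hmp : MeasurePreserving (fun x : ℝ => -x) volume volume :=
      Measure.measurePreserving_neg volume
    have hemb : MeasurableEmbedding (fun x : ℝ => -x) :=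
      (Homeomorph.neg ℝ).measurableEmbedding
    have := (hmp.integrableOn_comp_preimage hemb
      (f := fun x : ℝ => |x| ^ (-(2:ℝ)⁻¹)) (s := Set.Ico 0 2)).2 h02''
    have hpre : (fun x : ℝ => -x) ⁻¹' Set.Ico 0 2 = Set.Ioc (-2) 0 := by
      ext x; simp only [mem_preimage, mem_Ico, mem_Ioc]; constructor <;> intro h <;>
        constructor <;> linarith [h.1, h.2]
    rw [hpre] at this
    refine this.congr_fun (fun x _ => ?_) measurableSet_Ioc
    simp [Function.comp, abs_neg]
  have := hneg.union h02'
  rwa [Set.Ioc_union_Ioc_eq_Ioc (by norm_num) (by norm_num)] at this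

private lemma aux_axes_null :
    volume {z : ℂ | z.re = 0 ∨ z.im = 0} = 0 := by
  have h1 : volume {z : ℂ | z.re = 0} = 0 := by
    have : {z : ℂ | z.re = 0} =
        Complex.measurableEquivRealProd ⁻¹' (({0} : Set ℝ) ×ˢ (univ : Set ℝ)) := by
      ext z; simp [Complex.measurableEquivRealProd_apply, eq_comm]
    rw [this, Complex.volume_preserving_equiv_real_prod.measure_preimage
      (((measurableSet_singleton (0:ℝ)).prod MeasurableSet.univ).nullMeasurableSet)]
    rw [Measure.volume_eq_prod ℝ ℝ, Measure.prod_prod]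
    simp
  have h2 : volume {z : ℂ | z.im = 0} = 0 := by
    have : {z : ℂ | z.im = 0} =
        Complex.measurableEquivRealProd ⁻¹' ((univ : Set ℝ) ×ˢ ({0} : Set ℝ)) := by
      ext z; simp [Complex.measurableEquivRealProd_apply, eq_comm]
    rw [this, Complex.volume_preserving_equiv_real_prod.measure_preimage
      ((MeasurableSet.univ.prod (measurableSet_singleton (0:ℝ))).nullMeasurableSet)]
    rw [Measure.volume_eq_prod ℝ ℝ, Measure.prod_prod]
    simp
  have : {z : ℂ | z.re = 0 ∨ z.im = 0} = {z : ℂ | z.re = 0} ∪ {z : ℂ | z.im = 0} := rfl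
  rw [this]
  exact measure_union_null h1 h2

set_option maxHeartbeats 1000000 in
private lemma aux_inv_norm_int :
    IntegrableOn (fun z : ℂ => ‖z‖⁻¹) (Metric.ball (0:ℂ) 2) volume := by
  have hC : ∀ f : ℝ → ℝ, IntegrableOn f (Set.Ioc (-2) 2) volume →
      IntegrableOn (fun z : ℂ => f z.re * f z.im)
      (Complex.measurableEquivRealProd ⁻¹' (Set.Ioc (-2:ℝ) 2 ×ˢ Set.Ioc (-2:ℝ) 2)) volume := by
    intro f hf
    have hprod : IntegrableOn (fun p : ℝ × ℝ => f p.1 * f p.2)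
        (Set.Ioc (-2:ℝ) 2 ×ˢ Set.Ioc (-2:ℝ) 2) volume := by
      rw [IntegrableOn, Measure.volume_eq_prod ℝ ℝ, ← Measure.prod_restrict]
      exact Integrable.mul_prod hf hf
    exact (Complex.volume_preserving_equiv_real_prod.integrableOn_comp_preimage
      (MeasurableEquiv.measurableEmbedding _)).2 hprod
  have hC' := hC _ aux_f_int
  have hsub : Metric.ball (0:ℂ) 2 ⊆
      Complex.measurableEquivRealProd ⁻¹' (Set.Ioc (-2:ℝ) 2 ×ˢ Set.Ioc (-2:ℝ) 2) := by
    intro z hz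
    rw [mem_ball_zero_iff] at hz
    have hre : |z.re| < 2 := lt_of_le_of_lt (Complex.abs_re_le_norm z) hz
    have him : |z.im| < 2 := lt_of_le_of_lt (Complex.abs_im_le_norm z) hz
    rw [abs_lt] at hre him
    simp only [mem_preimage, Complex.measurableEquivRealProd_apply, mem_prod, mem_Ioc]
    exact ⟨⟨hre.1, hre.2.le⟩, ⟨him.1, him.2.le⟩⟩
  refine Integrable.mono' (hC'.mono_set hsub) ?_ ?_
  · exact (measurable_norm.inv).aestronglyMeasurable
  · refine ae_restrict_of_ae ?_
    have hnull : volume {z : ℂ |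
        ¬ ‖‖z‖⁻¹‖ ≤ |z.re| ^ (-(2:ℝ)⁻¹) * |z.im| ^ (-(2:ℝ)⁻¹)} = 0 := by
      refine measure_mono_null (fun z hz => ?_) aux_axes_null
      simp only [mem_setOf_eq] at hz ⊢
      by_contra hcon
      push_neg at hcon
      obtain ⟨hre, him⟩ := hcon
      apply hz
      have hre' : 0 < |z.re| := abs_pos.2 hre
      have him' : 0 < |z.im| := abs_pos.2 him
      have hu : (0:ℝ) < |z.re| ^ ((2:ℝ)⁻¹) * |z.im| ^ ((2:ℝ)⁻¹) :=
        mul_pos (Real.rpow_pos_of_pos hre' _) (Real.rpow_pos_of_pos him' _)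
      have hsq : ∀ x : ℝ, 0 ≤ x → (x ^ ((2:ℝ)⁻¹)) ^ 2 = x := fun x hx => by
        rw [← Real.rpow_natCast (x ^ ((2:ℝ)⁻¹)) 2, ← Real.rpow_mul hx]
        norm_num
      have hle : |z.re| ^ ((2:ℝ)⁻¹) * |z.im| ^ ((2:ℝ)⁻¹) ≤ ‖z‖ := by
        have h2 : (|z.re| ^ ((2:ℝ)⁻¹) * |z.im| ^ ((2:ℝ)⁻¹)) ^ 2 ≤ ‖z‖ ^ 2 := by
          rw [mul_pow, hsq _ (abs_nonneg _), hsq _ (abs_nonneg _)]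
          rw [Complex.sq_norm, Complex.normSq_apply]
          nlinarith [sq_nonneg (|z.re| - |z.im|), _root_.sq_abs z.re, _root_.sq_abs z.im]
        exact (pow_le_pow_iff_left₀ hu.le (norm_nonneg z) two_ne_zero).1 h2
      have : ‖z‖⁻¹ ≤ |z.re| ^ (-(2:ℝ)⁻¹) * |z.im| ^ (-(2:ℝ)⁻¹) := by
        rw [Real.rpow_neg (abs_nonneg _), Real.rpow_neg (abs_nonneg _), ← mul_inv]
        exact inv_anti₀ hu hle
      simpa [norm_inv, norm_norm] using this
    rw [← ae_iff] at hnull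
    exact hnull.mono fun z h => by simpa using h

theorem stmt_16 (α : ℝ) (hα : 0 < α) :
    ∃ c > 0, ∀ M : ℝ, 0 ≤ M → ∀ g : ℂ → ℂ,
      ContinuousOn g (Metric.ball (0:ℂ) 1) →
      (∀ z ∈ Metric.ball (0:ℂ) 1, ‖g z‖ ≤ M * (1 - ‖z‖^2) ^ (-α)) →
      ∀ w ∈ Metric.ball (0:ℂ) 1,
        (∫ z in Metric.ball (0:ℂ) 1,
          (1 - ‖z‖^2) ^ (α+1) * (1 - ‖w‖^2) ^ α /
            (2 * ‖1 - (starRingEnd ℂ) z * w‖ ^ (α+1) * ‖z - w‖) * ‖g z‖)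
          ≤ c * M := by
  set K : ℝ := ∫ z in Metric.ball (0:ℂ) 2, ‖z‖⁻¹ with hK_def
  have hKnn : 0 ≤ K := by
    refine integral_nonneg fun z => by positivity
  have h2a : (0:ℝ) < (2:ℝ) ^ α := Real.rpow_pos_of_pos two_pos α
  refine ⟨(2:ℝ) ^ α * (K + 1), by positivity, ?_⟩
  intro M hM g hgc hg w hwmem
  have hw : ‖w‖ < 1 := mem_ball_zero_iff.1 hwmem
  have hT : MeasurePreserving (· - w) volume volume :=
    measurePreserving_sub_right volume w
  have hTe : MeasurableEmbedding (· - w : ℂ → ℂ) :=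
    (Homeomorph.subRight w).measurableEmbedding
  have hpre : (· - w : ℂ → ℂ) ⁻¹' Metric.ball 0 2 = Metric.ball w 2 := by
    ext z
    simp [Metric.mem_ball, dist_eq_norm, mem_ball_zero_iff]
  have hIw : IntegrableOn (fun z : ℂ => ‖z - w‖⁻¹) (Metric.ball w 2) volume := by
    have := (hT.integrableOn_comp_preimage hTe
      (f := fun z : ℂ => ‖z‖⁻¹) (s := Metric.ball 0 2)).2 aux_inv_norm_int
    rwa [hpre] at this
  have hKw : (∫ z in Metric.ball w 2, ‖z - w‖⁻¹) = K := by
    have := hT.setIntegral_preimage_emb hTe (fun z : ℂ => ‖z‖⁻¹) (Metric.ball 0 2)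
    rw [hpre] at this
    exact this
  have hsub1 : Metric.ball (0:ℂ) 1 ⊆ Metric.ball w 2 := by
    intro z hz
    rw [mem_ball_zero_iff] at hz
    rw [Metric.mem_ball, dist_eq_norm]
    calc ‖z - w‖ ≤ ‖z‖ + ‖w‖ := norm_sub_le z w
      _ < 2 := by linarith
  have hG : IntegrableOn (fun z : ℂ => (2:ℝ) ^ α * M * ‖z - w‖⁻¹)
      (Metric.ball (0:ℂ) 1) volume :=
    (hIw.mono_set hsub1).const_mul _
  -- pointwise nonnegativity and bound
  have hpos : ∀ z ∈ Metric.ball (0:ℂ) 1,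
      0 ≤ (1 - ‖z‖^2) ^ (α+1) * (1 - ‖w‖^2) ^ α /
        (2 * ‖1 - (starRingEnd ℂ) z * w‖ ^ (α+1) * ‖z - w‖) * ‖g z‖ := by
    intro z hz
    have hz1 : ‖z‖ < 1 := mem_ball_zero_iff.1 hz
    have ha : (0:ℝ) ≤ 1 - ‖z‖^2 := by nlinarith [norm_nonneg z]
    have hb : (0:ℝ) ≤ 1 - ‖w‖^2 := by nlinarith [norm_nonneg w]
    have := Real.rpow_nonneg ha (α+1)
    have := Real.rpow_nonneg hb α
    have := Real.rpow_nonneg (norm_nonneg (1 - (starRingEnd ℂ) z * w)) (α+1)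
    positivity
  have hbd : ∀ z ∈ Metric.ball (0:ℂ) 1,
      (1 - ‖z‖^2) ^ (α+1) * (1 - ‖w‖^2) ^ α /
        (2 * ‖1 - (starRingEnd ℂ) z * w‖ ^ (α+1) * ‖z - w‖) * ‖g z‖
        ≤ (2:ℝ) ^ α * M * ‖z - w‖⁻¹ := by
    intro z hz
    have hz1 : ‖z‖ < 1 := mem_ball_zero_iff.1 hz
    rcases eq_or_ne z w with rfl | hzw
    · simp
    · have ha : (0:ℝ) < 1 - ‖z‖^2 := by nlinarith [norm_nonneg z]
      have hb : (0:ℝ) < 1 - ‖w‖^2 := by nlinarith [norm_nonneg w]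
      have hr : (0:ℝ) < ‖z - w‖ := by
        rw [norm_pos_iff, sub_ne_zero]; exact hzw
      set D : ℝ := ‖1 - (starRingEnd ℂ) z * w‖ with hD_def
      have hnorm : ‖(starRingEnd ℂ) z * w‖ = ‖z‖ * ‖w‖ := by
        rw [norm_mul, RCLike.norm_conj]
      have hDz : 1 - ‖z‖ ≤ D := by
        have h1 : ‖(1:ℂ)‖ - ‖(starRingEnd ℂ) z * w‖ ≤ D := norm_sub_norm_le _ _
        rw [norm_one, hnorm] at h1
        nlinarith [norm_nonneg z, norm_nonneg w]
      have hDw : 1 - ‖w‖ ≤ D := by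
        have h1 : ‖(1:ℂ)‖ - ‖(starRingEnd ℂ) z * w‖ ≤ D := norm_sub_norm_le _ _
        rw [norm_one, hnorm] at h1
        nlinarith [norm_nonneg z, norm_nonneg w]
      have hD : (0:ℝ) < D := lt_of_lt_of_le (by linarith) hDw
      -- bound ‖g z‖
      have step1 : (1 - ‖z‖^2) ^ (α+1) * (1 - ‖w‖^2) ^ α /
            (2 * D ^ (α+1) * ‖z - w‖) * ‖g z‖
          ≤ (1 - ‖z‖^2) ^ (α+1) * (1 - ‖w‖^2) ^ α /
            (2 * D ^ (α+1) * ‖z - w‖) * (M * (1 - ‖z‖^2) ^ (-α)) := by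
        refine mul_le_mul_of_nonneg_left (hg z hz) ?_
        have := Real.rpow_nonneg ha.le (α+1)
        have := Real.rpow_nonneg hb.le α
        have := Real.rpow_nonneg hD.le (α+1)
        positivity
      refine step1.trans ?_
      have hdenom : (0:ℝ) < 2 * D ^ (α+1) * ‖z - w‖ :=
        mul_pos (mul_pos two_pos (Real.rpow_pos_of_pos hD _)) hr
      rw [div_mul_eq_mul_div, div_le_iff₀ hdenom]
      have e1 : (1 - ‖z‖^2) ^ (α+1) * (1 - ‖z‖^2) ^ (-α) = 1 - ‖z‖^2 := by
        rw [← Real.rpow_add ha]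
        norm_num
      have e2 : D ^ (α+1) = D ^ α * D := by
        rw [Real.rpow_add hD, Real.rpow_one]
      have eL : (1 - ‖z‖^2) ^ (α+1) * (1 - ‖w‖^2) ^ α * (M * (1 - ‖z‖^2) ^ (-α))
          = (1 - ‖z‖^2) * (1 - ‖w‖^2) ^ α * M := by
        calc (1 - ‖z‖^2) ^ (α+1) * (1 - ‖w‖^2) ^ α * (M * (1 - ‖z‖^2) ^ (-α))
            = (1 - ‖z‖^2) ^ (α+1) * (1 - ‖z‖^2) ^ (-α) * ((1 - ‖w‖^2) ^ α * M) := by ring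
          _ = (1 - ‖z‖^2) * (1 - ‖w‖^2) ^ α * M := by rw [e1]; ring
      have eR : (2:ℝ) ^ α * M * ‖z - w‖⁻¹ * (2 * D ^ (α+1) * ‖z - w‖)
          = (2 * D) * ((2:ℝ) ^ α * D ^ α) * M := by
        calc (2:ℝ) ^ α * M * ‖z - w‖⁻¹ * (2 * D ^ (α+1) * ‖z - w‖)
            = (2 * D) * ((2:ℝ) ^ α * D ^ α) * M * (‖z - w‖⁻¹ * ‖z - w‖) := by rw [e2]; ring
          _ = (2 * D) * ((2:ℝ) ^ α * D ^ α) * M := by rw [inv_mul_cancel₀ hr.ne', mul_one]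
      rw [eL, eR]
      have ha2 : 1 - ‖z‖^2 ≤ 2 * D := by nlinarith [norm_nonneg z]
      have hb2 : (1 - ‖w‖^2) ^ α ≤ (2:ℝ) ^ α * D ^ α := by
        rw [← Real.mul_rpow (by norm_num) hD.le]
        refine Real.rpow_le_rpow hb.le ?_ hα.le
        nlinarith [norm_nonneg w]
      have hmul : (1 - ‖z‖^2) * (1 - ‖w‖^2) ^ α ≤ (2 * D) * ((2:ℝ) ^ α * D ^ α) :=
        mul_le_mul ha2 hb2 (Real.rpow_nonneg hb.le α) (by positivity)
      exact mul_le_mul_of_nonneg_right hmul hM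
  -- assemble
  calc (∫ z in Metric.ball (0:ℂ) 1,
          (1 - ‖z‖^2) ^ (α+1) * (1 - ‖w‖^2) ^ α /
            (2 * ‖1 - (starRingEnd ℂ) z * w‖ ^ (α+1) * ‖z - w‖) * ‖g z‖)
      ≤ ∫ z in Metric.ball (0:ℂ) 1, (2:ℝ) ^ α * M * ‖z - w‖⁻¹ := by
        refine integral_mono_of_nonneg ?_ hG ?_
        · exact (ae_restrict_iff' measurableSet_ball).2 (ae_of_all _ hpos)
        · exact (ae_restrict_iff' measurableSet_ball).2 (ae_of_all _ hbd)
    _ = (2:ℝ) ^ α * M * ∫ z in Metric.ball (0:ℂ) 1, ‖z - w‖⁻¹ := by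
        rw [MeasureTheory.integral_const_mul]
    _ ≤ (2:ℝ) ^ α * M * K := by
        refine mul_le_mul_of_nonneg_left ?_ (by positivity)
        rw [← hKw]
        refine setIntegral_mono_set hIw (ae_of_all _ fun z => by positivity)
          (HasSubset.Subset.eventuallyLE hsub1)
    _ ≤ (2:ℝ) ^ α * (K + 1) * M := by nlinarith
end
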